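/- Andreief's identity: Let μ be a measure on ℝ and f_1,…,f_n, g_1,…,g_n ∈ L²(μ). Then ∫⋯∫ det(f_j(x_k))_{j,k=1}^n det(g_j(x_k))_{j,k=1}^n dμ(x_1)⋯dμ(x_n) = n! · det( ∫ f_j(x) g_k(x) dμ(x) )_{j,k=1}^n. -/

import Mathlib

open MeasureTheory

theorem stmt6 (μ : Measure ℝ) [SigmaFinite μ] (n : ℕ)
    (f g : Fin n → ℝ → ℝ)
    (hf : ∀ j, MemLp (f j) 2 μ) (hg : ∀ j, MemLp (g j) 2 μ) :
    (∫ x : Fin n → ℝ,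
        (Matrix.of fun j k : Fin n => f j (x k)).det *
          (Matrix.of fun j k : Fin n => g j (x k)).det
        ∂(Measure.pi fun _ => μ))
      = (n.factorial : ℝ) *
          (Matrix.of fun j k : Fin n => ∫ x : ℝ, f j x * g k x ∂μ).det := by
  classical
  letI : MeasureSpace ℝ := ⟨μ⟩
  have hvol : (Measure.pi fun _ : Fin n => μ) = (volume : Measure (Fin n → ℝ)) :=
    (volume_pi).symm
  have hfg : ∀ j k, Integrable (fun x => f j x * g k x) μ := by
    intro j k
    have h := (hg k).smul (hf j) (p := 2) (q := 2) (r := 1)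
    rw [memLp_one_iff_integrable] at h
    exact h
  set A : Matrix (Fin n) (Fin n) ℝ := Matrix.of fun j k => ∫ x : ℝ, f j x * g k x ∂μ with hA
  set s : Equiv.Perm (Fin n) → ℝ := fun σ => ((Equiv.Perm.sign σ : ℤ) : ℝ) with hs
  have hsign : ∀ σ : Equiv.Perm (Fin n), s σ * s σ = 1 := by
    intro σ
    rcases Int.units_eq_one_or (Equiv.Perm.sign σ) with h | h <;> simp [hs, h]
  have hint : ∀ σ τ : Equiv.Perm (Fin n),
      Integrable (fun x : Fin n → ℝ => ∏ i, (f (σ i) (x i) * g (τ i) (x i)))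
        (Measure.pi fun _ : Fin n => μ) := by
    intro σ τ
    rw [hvol]
    exact Integrable.fintype_prod (f := fun i t => f (σ i) t * g (τ i) t)
      (fun i => hfg _ _)
  have key : ∀ σ τ : Equiv.Perm (Fin n),
      (∫ x : Fin n → ℝ, ∏ i, (f (σ i) (x i) * g (τ i) (x i))
          ∂(Measure.pi fun _ : Fin n => μ)) = ∏ i, A (σ i) (τ i) := by
    intro σ τ
    rw [hvol]
    have h := MeasureTheory.integral_fintype_prod_eq_prod (ι := Fin n)
      (fun i (t : ℝ) => f (σ i) t * g (τ i) t) (μ := fun _ => μ)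
    rw [hvol] at h
    simpa [hA] using h
  calc
    (∫ x : Fin n → ℝ,
        (Matrix.of fun j k : Fin n => f j (x k)).det *
          (Matrix.of fun j k : Fin n => g j (x k)).det
        ∂(Measure.pi fun _ => μ))
      = ∫ x : Fin n → ℝ, ∑ σ : Equiv.Perm (Fin n), ∑ τ : Equiv.Perm (Fin n),
          (s σ * s τ) * ∏ i, (f (σ i) (x i) * g (τ i) (x i))
          ∂(Measure.pi fun _ => μ) := by
        congr 1
        funext x
        rw [Matrix.det_apply', Matrix.det_apply', Finset.sum_mul_sum]
        refine Finset.sum_congr rfl fun σ _ => Finset.sum_congr rfl fun τ _ => ?_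
        rw [Finset.prod_mul_distrib]
        simp only [Matrix.of_apply]
        ring
    _ = ∑ σ : Equiv.Perm (Fin n), ∑ τ : Equiv.Perm (Fin n),
          (s σ * s τ) * ∏ i, A (σ i) (τ i) := by
        rw [integral_finset_sum _ (fun σ _ => integrable_finset_sum _
          (fun τ _ => ((hint σ τ).const_mul _)))]
        refine Finset.sum_congr rfl fun σ _ => ?_
        rw [integral_finset_sum _ (fun τ _ => ((hint σ τ).const_mul _))]
        refine Finset.sum_congr rfl fun τ _ => ?_
        rw [MeasureTheory.integral_const_mul, key]
    _ = ∑ _σ : Equiv.Perm (Fin n), A.det := by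
        refine Finset.sum_congr rfl fun σ _ => ?_
        rw [← Matrix.det_transpose A, Matrix.det_apply']
        rw [← Fintype.sum_equiv (Equiv.mulRight σ)
          (fun ρ => (s σ * s (ρ * σ)) * ∏ i, A (σ i) ((ρ * σ) i))
          (fun τ => (s σ * s τ) * ∏ i, A (σ i) (τ i)) (fun ρ => rfl)]
        refine Finset.sum_congr rfl fun ρ _ => ?_
        have h1 : s σ * s (ρ * σ) = s ρ := by
          simp only [hs, map_mul, Units.val_mul, Int.cast_mul]
          rcases Int.units_eq_one_or (Equiv.Perm.sign σ) with h | h <;>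
            simp [h]
        have h2 : (∏ i, A (σ i) ((ρ * σ) i)) = ∏ i, A.transpose (ρ i) i := by
          simp only [Equiv.Perm.mul_apply, Matrix.transpose_apply]
          exact Equiv.prod_comp σ (fun j => A j (ρ j))
        rw [h1, h2]
    _ = (n.factorial : ℝ) * A.det := by
        rw [Finset.sum_const, nsmul_eq_mul]
        congr 1
        simp [Fintype.card_perm]
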